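/- arXiv:0804.4663 — 4 statements merged into one kernel-verified Lean document; each statement's English description precedes it below -/
import Mathlib

section
/- Let G be a finite group and a, b, c non-identity elements with abc = 1 whose generated cyclic subgroups A = ⟨a⟩, B = ⟨b⟩, C = ⟨c⟩ pairwise intersect trivially. Define T∘ = {(gA, gB, gC) : g ∈ G} and T⋆ = {(gA, gB, g a⁻¹ C) : g ∈ G}. Then T∘ and T⋆ are disjoint: no triple (gA, gB, gC) equals a triple (hA, hB, h a⁻¹ C). -/
/-- The group-based trade T∘ = {(gA,gB,gC)} and its mate
T⋆ = {(gA,gB,ga⁻¹C)} are disjoint. -/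
theorem group_trade_disjoint {G : Type*} [Group G] [Finite G] (a b c : G)
    (ha : a ≠ 1) (hb : b ≠ 1) (hc : c ≠ 1) (habc : a * b * c = 1)
    (hAB : Subgroup.zpowers a ⊓ Subgroup.zpowers b = ⊥)
    (hAC : Subgroup.zpowers a ⊓ Subgroup.zpowers c = ⊥)
    (hBC : Subgroup.zpowers b ⊓ Subgroup.zpowers c = ⊥) :
    ∀ g h : G,
      ((g : G ⧸ Subgroup.zpowers a), (g : G ⧸ Subgroup.zpowers b),
        (g : G ⧸ Subgroup.zpowers c)) ≠
      ((h : G ⧸ Subgroup.zpowers a), (h : G ⧸ Subgroup.zpowers b),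
        ((h * a⁻¹ : G) : G ⧸ Subgroup.zpowers c)) := by
  intro g h heq
  rw [Prod.mk.injEq, Prod.mk.injEq] at heq
  obtain ⟨h1, h2, h3⟩ := heq
  rw [QuotientGroup.eq] at h1 h2 h3
  have hgh : g⁻¹ * h ∈ Subgroup.zpowers a ⊓ Subgroup.zpowers b := ⟨h1, h2⟩
  rw [hAB, Subgroup.mem_bot] at hgh
  have hg : g = h := by
    have := inv_mul_eq_one.mp hgh
    simpa using this
  subst hg
  have : a ∈ Subgroup.zpowers a ⊓ Subgroup.zpowers c := by
    refine ⟨Subgroup.mem_zpowers a, ?_⟩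
    have : g⁻¹ * (g * a⁻¹) ∈ Subgroup.zpowers c := h3
    simpa using (Subgroup.zpowers c).inv_mem this
  rw [hAC, Subgroup.mem_bot] at this
  exact ha this
end

section
/- Let G be a finite group and a, b, c non-identity elements with abc = 1 whose generated cyclic subgroups A, B, C pairwise intersect trivially. Then the pair (T∘, T⋆) with T∘ = {(gA, gB, gC) : g ∈ G} and T⋆ = {(gA, gB, g a⁻¹ C) : g ∈ G} is a latin bitrade: they are disjoint, each is a partial latin square, and for every triple of one and every pair of coordinates r ≠ s there is a unique triple of the other agreeing exactly in coordinates r and s. -/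
section GTHelpers
variable {G : Type*} [Group G]

lemma GT.inf_bot_eq_one {H K : Subgroup G} (h : H ⊓ K = ⊥) {x : G}
    (hx : x ∈ H) (hk : x ∈ K) : x = 1 :=
  Subgroup.mem_bot.mp (h ▸ Subgroup.mem_inf.mpr ⟨hx, hk⟩)

lemma GT.commute_zpowers {b x : G} (hx : x ∈ Subgroup.zpowers b) : Commute b x := by
  obtain ⟨k, rfl⟩ := Subgroup.mem_zpowers_iff.mp hx
  exact (Commute.refl b).zpow_right k

lemma GT.coset_mul_mem {H : Subgroup G} (g : G) {x : G} (hx : x ∈ H) :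
    ((g * x : G) : G ⧸ H) = (g : G ⧸ H) :=
  QuotientGroup.eq.mpr (by rw [show (g*x)⁻¹ * g = x⁻¹ by group]; exact inv_mem hx)

variable {a b c : G}

lemma GT.a_eq (habc : a * b * c = 1) : a = c⁻¹ * b⁻¹ := by
  have h1 : a = (b*c)⁻¹ := eq_inv_of_mul_eq_one_left (by rw [← mul_assoc]; exact habc)
  rw [h1, mul_inv_rev]

lemma GT.ainv_eq (habc : a * b * c = 1) : a⁻¹ = b * c := by
  rw [GT.a_eq habc]; group

lemma GT.c_eq (habc : a * b * c = 1) : c = b⁻¹ * a⁻¹ := by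
  have h1 : c = (a*b)⁻¹ := eq_inv_of_mul_eq_one_right habc
  rw [h1, mul_inv_rev]

lemma GT.keyA (hAC : Subgroup.zpowers a ⊓ Subgroup.zpowers c = ⊥) {x : G}
    (hx : x ∈ Subgroup.zpowers a) (hy : a * x * a⁻¹ ∈ Subgroup.zpowers c) : x = 1 := by
  have h1 : a * x * a⁻¹ = x := by rw [(GT.commute_zpowers hx).eq]; group
  exact GT.inf_bot_eq_one hAC hx (h1 ▸ hy)

lemma GT.keyB (habc : a * b * c = 1)
    (hBC : Subgroup.zpowers b ⊓ Subgroup.zpowers c = ⊥) {x : G}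
    (hx : x ∈ Subgroup.zpowers b) (hy : a * x * a⁻¹ ∈ Subgroup.zpowers c) : x = 1 := by
  have hbx : b⁻¹ * x = x * b⁻¹ := (GT.commute_zpowers hx).inv_left.eq
  have key : a * x * a⁻¹ = c⁻¹ * x * c := by
    rw [GT.a_eq habc, show c⁻¹ * b⁻¹ * x * (c⁻¹ * b⁻¹)⁻¹ = c⁻¹ * (b⁻¹ * x) * (b * c) by group,
      hbx]; group
  have hyc : c⁻¹ * x * c ∈ Subgroup.zpowers c := key ▸ hy
  have hcy : c * (c⁻¹ * x * c) = (c⁻¹ * x * c) * c := (GT.commute_zpowers hyc).eq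
  have hx' : x = c⁻¹ * x * c := by
    have h' : x * c = (c⁻¹ * x * c) * c := by rw [← hcy]; group
    exact mul_right_cancel h'
  exact GT.inf_bot_eq_one hBC hx (hx' ▸ hyc)

lemma GT.key6 (hAC : Subgroup.zpowers a ⊓ Subgroup.zpowers c = ⊥) {x : G}
    (hx : x ∈ Subgroup.zpowers a) (hy : x * a⁻¹ ∈ Subgroup.zpowers c) : x = a := by
  have h1 : x * a⁻¹ ∈ Subgroup.zpowers a := mul_mem hx (inv_mem (Subgroup.mem_zpowers a))
  exact mul_inv_eq_one.mp (GT.inf_bot_eq_one hAC h1 hy)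

lemma GT.key7 (habc : a * b * c = 1)
    (hBC : Subgroup.zpowers b ⊓ Subgroup.zpowers c = ⊥) {x : G}
    (hx : x ∈ Subgroup.zpowers b) (hy : x * a⁻¹ ∈ Subgroup.zpowers c) : x = b⁻¹ := by
  have h1 : x * b = (x * a⁻¹) * c⁻¹ := by rw [GT.ainv_eq habc]; group
  have h2 : x * b ∈ Subgroup.zpowers b := mul_mem hx (Subgroup.mem_zpowers b)
  have h3 : x * b ∈ Subgroup.zpowers c :=
    h1 ▸ mul_mem hy (inv_mem (Subgroup.mem_zpowers c))
  exact eq_inv_of_mul_eq_one_left (GT.inf_bot_eq_one hBC h2 h3)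

lemma GT.key8 (hAC : Subgroup.zpowers a ⊓ Subgroup.zpowers c = ⊥) {x : G}
    (hx : x ∈ Subgroup.zpowers a) (hy : a * x ∈ Subgroup.zpowers c) : x = a⁻¹ := by
  have h1 : a * x ∈ Subgroup.zpowers a := mul_mem (Subgroup.mem_zpowers a) hx
  exact eq_inv_of_mul_eq_one_right (GT.inf_bot_eq_one hAC h1 hy)

lemma GT.key9 (habc : a * b * c = 1)
    (hBC : Subgroup.zpowers b ⊓ Subgroup.zpowers c = ⊥) {x : G}
    (hx : x ∈ Subgroup.zpowers b) (hy : a * x ∈ Subgroup.zpowers c) : x = b := by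
  have hbx : b⁻¹ * x = x * b⁻¹ := (GT.commute_zpowers hx).inv_left.eq
  have h1 : x * b⁻¹ = c * (a * x) := by
    rw [GT.a_eq habc, show c * (c⁻¹ * b⁻¹ * x) = b⁻¹ * x by group, hbx]
  have h2 : x * b⁻¹ ∈ Subgroup.zpowers b :=
    mul_mem hx (inv_mem (Subgroup.mem_zpowers b))
  have h3 : x * b⁻¹ ∈ Subgroup.zpowers c := h1 ▸ mul_mem (Subgroup.mem_zpowers c) hy
  exact mul_inv_eq_one.mp (GT.inf_bot_eq_one hBC h2 h3)

end GTHelpers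


/-- A partial latin square: any two triples agreeing in two of the three
coordinates are equal. -/
def IsPLS {A1 A2 A3 : Type*} (T : Set (A1 × A2 × A3)) : Prop :=
  ∀ ⦃t⦄, t ∈ T → ∀ ⦃t'⦄, t' ∈ T →
    ((t.1 = t'.1 ∧ t.2.1 = t'.2.1) → t = t') ∧
    ((t.1 = t'.1 ∧ t.2.2 = t'.2.2) → t = t') ∧
    ((t.2.1 = t'.2.1 ∧ t.2.2 = t'.2.2) → t = t')

/-- A latin bitrade: two disjoint partial latin squares such that for every
triple of one and every pair of coordinates there is a unique triple of the
other agreeing in those two coordinates. -/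
def IsBitrade {A1 A2 A3 : Type*} (T U : Set (A1 × A2 × A3)) : Prop :=
  IsPLS T ∧ IsPLS U ∧ Disjoint T U ∧
  (∀ ⦃t⦄, t ∈ T →
    (∃! u, u ∈ U ∧ u.1 = t.1 ∧ u.2.1 = t.2.1) ∧
    (∃! u, u ∈ U ∧ u.1 = t.1 ∧ u.2.2 = t.2.2) ∧
    (∃! u, u ∈ U ∧ u.2.1 = t.2.1 ∧ u.2.2 = t.2.2)) ∧
  (∀ ⦃u⦄, u ∈ U →
    (∃! t, t ∈ T ∧ t.1 = u.1 ∧ t.2.1 = u.2.1) ∧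
    (∃! t, t ∈ T ∧ t.1 = u.1 ∧ t.2.2 = u.2.2) ∧
    (∃! t, t ∈ T ∧ t.2.1 = u.2.1 ∧ t.2.2 = u.2.2))

/-- `e : U ≃ T` is the map `β₁`: it changes the first (row) coordinate and
preserves the other two. -/
def IsBeta1 {A1 A2 A3 : Type*} (T U : Set (A1 × A2 × A3)) (e : U ≃ T) : Prop :=
  ∀ u : U, ((e u : A1 × A2 × A3).1 ≠ (u : A1 × A2 × A3).1) ∧
    ((e u : A1 × A2 × A3).2.1 = (u : A1 × A2 × A3).2.1) ∧
    ((e u : A1 × A2 × A3).2.2 = (u : A1 × A2 × A3).2.2)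

/-- `e : U ≃ T` is the map `β₂`: it changes the second (column) coordinate and
preserves the other two. -/
def IsBeta2 {A1 A2 A3 : Type*} (T U : Set (A1 × A2 × A3)) (e : U ≃ T) : Prop :=
  ∀ u : U, ((e u : A1 × A2 × A3).1 = (u : A1 × A2 × A3).1) ∧
    ((e u : A1 × A2 × A3).2.1 ≠ (u : A1 × A2 × A3).2.1) ∧
    ((e u : A1 × A2 × A3).2.2 = (u : A1 × A2 × A3).2.2)

/-- `e : U ≃ T` is the map `β₃`: it changes the third (symbol) coordinate and
preserves the other two. -/
def IsBeta3 {A1 A2 A3 : Type*} (T U : Set (A1 × A2 × A3)) (e : U ≃ T) : Prop :=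
  ∀ u : U, ((e u : A1 × A2 × A3).1 = (u : A1 × A2 × A3).1) ∧
    ((e u : A1 × A2 × A3).2.1 = (u : A1 × A2 × A3).2.1) ∧
    ((e u : A1 × A2 × A3).2.2 ≠ (u : A1 × A2 × A3).2.2)

/-- (Drápal) The pair (T∘, T⋆) with T∘ = {(gA,gB,gC) : g ∈ G} and
T⋆ = {(gA,gB,ga⁻¹C) : g ∈ G} is a latin bitrade. -/
theorem group_trade_is_bitrade {G : Type*} [Group G] [Finite G] (a b c : G)
    (ha : a ≠ 1) (hb : b ≠ 1) (hc : c ≠ 1) (habc : a * b * c = 1)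
    (hAB : Subgroup.zpowers a ⊓ Subgroup.zpowers b = ⊥)
    (hAC : Subgroup.zpowers a ⊓ Subgroup.zpowers c = ⊥)
    (hBC : Subgroup.zpowers b ⊓ Subgroup.zpowers c = ⊥) :
    IsBitrade
      (Set.range fun g : G => ((g : G ⧸ Subgroup.zpowers a),
        (g : G ⧸ Subgroup.zpowers b), (g : G ⧸ Subgroup.zpowers c)))
      (Set.range fun g : G => ((g : G ⧸ Subgroup.zpowers a),
        (g : G ⧸ Subgroup.zpowers b),
        ((g * a⁻¹ : G) : G ⧸ Subgroup.zpowers c))) := by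
  have kAB : ∀ g h : G, (g : G ⧸ Subgroup.zpowers a) = h →
      (g : G ⧸ Subgroup.zpowers b) = h → g = h := fun g h h1 h2 =>
    inv_mul_eq_one.mp (GT.inf_bot_eq_one hAB (QuotientGroup.eq.mp h1) (QuotientGroup.eq.mp h2))
  have kAC : ∀ g h : G, (g : G ⧸ Subgroup.zpowers a) = h →
      (g : G ⧸ Subgroup.zpowers c) = h → g = h := fun g h h1 h2 =>
    inv_mul_eq_one.mp (GT.inf_bot_eq_one hAC (QuotientGroup.eq.mp h1) (QuotientGroup.eq.mp h2))
  have kBC : ∀ g h : G, (g : G ⧸ Subgroup.zpowers b) = h →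
      (g : G ⧸ Subgroup.zpowers c) = h → g = h := fun g h h1 h2 =>
    inv_mul_eq_one.mp (GT.inf_bot_eq_one hBC (QuotientGroup.eq.mp h1) (QuotientGroup.eq.mp h2))
  -- shifted third coordinate equalities
  have shiftC : ∀ g h : G,
      ((g * a⁻¹ : G) : G ⧸ Subgroup.zpowers c) = ((h * a⁻¹ : G) : G ⧸ Subgroup.zpowers c) →
      a * (g⁻¹ * h) * a⁻¹ ∈ Subgroup.zpowers c := by
    intro g h h2
    have := QuotientGroup.eq.mp h2
    rwa [show (g * a⁻¹)⁻¹ * (h * a⁻¹) = a * (g⁻¹ * h) * a⁻¹ by group] at this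
  have mixC : ∀ g h : G,
      ((h * a⁻¹ : G) : G ⧸ Subgroup.zpowers c) = (g : G ⧸ Subgroup.zpowers c) →
      (g⁻¹ * h) * a⁻¹ ∈ Subgroup.zpowers c := by
    intro g h h2
    have := QuotientGroup.eq.mp h2.symm
    rwa [show g⁻¹ * (h * a⁻¹) = (g⁻¹ * h) * a⁻¹ by group] at this
  have mixC' : ∀ g h : G,
      (h : G ⧸ Subgroup.zpowers c) = ((g * a⁻¹ : G) : G ⧸ Subgroup.zpowers c) →
      a * (g⁻¹ * h) ∈ Subgroup.zpowers c := by
    intro g h h2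
    have := QuotientGroup.eq.mp h2.symm
    rwa [show (g * a⁻¹)⁻¹ * h = a * (g⁻¹ * h) by group] at this
  refine ⟨?_, ?_, ?_, ?_, ?_⟩
  · -- T is a PLS
    rintro t ⟨g, rfl⟩ t' ⟨h, rfl⟩
    refine ⟨fun ⟨h1, h2⟩ => ?_, fun ⟨h1, h2⟩ => ?_, fun ⟨h1, h2⟩ => ?_⟩
    · rw [kAB g h h1 h2]
    · rw [kAC g h h1 h2]
    · rw [kBC g h h1 h2]
  · -- U is a PLS
    rintro t ⟨g, rfl⟩ t' ⟨h, rfl⟩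
    refine ⟨fun ⟨h1, h2⟩ => ?_, fun ⟨h1, h2⟩ => ?_, fun ⟨h1, h2⟩ => ?_⟩
    · rw [kAB g h h1 h2]
    · have hx : g⁻¹ * h ∈ Subgroup.zpowers a := QuotientGroup.eq.mp h1
      have := GT.keyA hAC hx (shiftC g h h2)
      rw [inv_mul_eq_one.mp this]
    · have hx : g⁻¹ * h ∈ Subgroup.zpowers b := QuotientGroup.eq.mp h1
      have := GT.keyB habc hBC hx (shiftC g h h2)
      rw [inv_mul_eq_one.mp this]
  · -- Disjoint
    rw [Set.disjoint_left]
    rintro t ⟨g, rfl⟩ ⟨h, heq⟩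
    rw [Prod.ext_iff, Prod.ext_iff] at heq
    obtain ⟨e1, e2, e3⟩ := heq
    have hgh : h = g := kAB h g e1 e2
    subst hgh
    have : h⁻¹ * (h * a⁻¹) ∈ Subgroup.zpowers c := QuotientGroup.eq.mp e3.symm
    rw [show h⁻¹ * (h * a⁻¹) = a⁻¹ by group] at this
    exact ha (inv_eq_one.mp (GT.inf_bot_eq_one hAC (inv_mem (Subgroup.mem_zpowers a)) this))
  · -- for each t in T
    rintro t ⟨g, rfl⟩
    refine ⟨?_, ?_, ?_⟩
    · refine ⟨_, ⟨⟨g, rfl⟩, rfl, rfl⟩, ?_⟩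
      rintro u ⟨⟨h, rfl⟩, e1, e2⟩
      rw [kAB h g e1 e2]
    · refine ⟨_, ⟨⟨g * a, rfl⟩, ?_, ?_⟩, ?_⟩
      · exact GT.coset_mul_mem g (Subgroup.mem_zpowers a)
      · show ((g * a * a⁻¹ : G) : G ⧸ Subgroup.zpowers c) = _
        rw [mul_inv_cancel_right]
      · rintro u ⟨⟨h, rfl⟩, e1, e2⟩
        have hx : g⁻¹ * h ∈ Subgroup.zpowers a := QuotientGroup.eq.mp e1.symm
        have hh : h = g * a := inv_mul_eq_iff_eq_mul.mp (GT.key6 hAC hx (mixC g h e2))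
        rw [hh]
    · refine ⟨_, ⟨⟨g * b⁻¹, rfl⟩, ?_, ?_⟩, ?_⟩
      · exact GT.coset_mul_mem g (inv_mem (Subgroup.mem_zpowers b))
      · show ((g * b⁻¹ * a⁻¹ : G) : G ⧸ Subgroup.zpowers c) = _
        rw [mul_assoc]
        exact GT.coset_mul_mem g (by rw [← GT.c_eq habc]; exact Subgroup.mem_zpowers c)
      · rintro u ⟨⟨h, rfl⟩, e1, e2⟩
        have hx : g⁻¹ * h ∈ Subgroup.zpowers b := QuotientGroup.eq.mp e1.symm
        have hh : h = g * b⁻¹ :=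
          inv_mul_eq_iff_eq_mul.mp (GT.key7 habc hBC hx (mixC g h e2))
        rw [hh]
  · -- for each u in U
    rintro u ⟨g, rfl⟩
    refine ⟨?_, ?_, ?_⟩
    · refine ⟨_, ⟨⟨g, rfl⟩, rfl, rfl⟩, ?_⟩
      rintro t ⟨⟨h, rfl⟩, e1, e2⟩
      rw [kAB h g e1 e2]
    · refine ⟨_, ⟨⟨g * a⁻¹, rfl⟩, ?_, rfl⟩, ?_⟩
      · exact GT.coset_mul_mem g (inv_mem (Subgroup.mem_zpowers a))
      · rintro t ⟨⟨h, rfl⟩, e1, e2⟩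
        have hx : g⁻¹ * h ∈ Subgroup.zpowers a := QuotientGroup.eq.mp e1.symm
        have hh : h = g * a⁻¹ := inv_mul_eq_iff_eq_mul.mp (GT.key8 hAC hx (mixC' g h e2))
        rw [hh]
    · refine ⟨_, ⟨⟨g * b, rfl⟩, ?_, ?_⟩, ?_⟩
      · exact GT.coset_mul_mem g (Subgroup.mem_zpowers b)
      · show ((g * b : G) : G ⧸ Subgroup.zpowers c) = _
        refine QuotientGroup.eq.mpr ?_
        rw [show (g * b)⁻¹ * (g * a⁻¹) = b⁻¹ * a⁻¹ by group, ← GT.c_eq habc]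
        exact Subgroup.mem_zpowers c
      · rintro t ⟨⟨h, rfl⟩, e1, e2⟩
        have hx : g⁻¹ * h ∈ Subgroup.zpowers b := QuotientGroup.eq.mp e1.symm
        have hh : h = g * b :=
          inv_mul_eq_iff_eq_mul.mp (GT.key9 habc hBC hx (mixC' g h e2))
        rw [hh]
end

section
/- Let (T∘, T⋆) be a latin bitrade and suppose (α1, α2, α3) is a triple of permutations that is an autotopism of T∘, i.e. maps T∘ to itself. If T∘ is thin (whenever distinct cells (i,j), (i',j') with i ≠ i', j ≠ j' satisfy i∘j = i'∘j', then i⋆j' is undefined or equals i∘j), then the disjoint mate T⋆ is uniquely determined by T∘: if (T∘, T⋆) and (T∘, T⋆') are both latin bitrades with T∘ thin, then T⋆ = T⋆'. -/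
/-- T∘ is thin (relative to the mate U): if two cells in distinct rows and
columns hold the same symbol of T∘, then the "opposite corner" cell either
holds no symbol of U or holds that same symbol. -/
def IsThin {A1 A2 A3 : Type*} (T U : Set (A1 × A2 × A3)) : Prop :=
  ∀ i j k i' j', (i, j, k) ∈ T → (i', j', k) ∈ T → i ≠ i' → j ≠ j' →
    ∀ k', (i, j', k') ∈ U → k' = k

/-- If (T∘, T⋆) is a thin latin bitrade then the disjoint mate of T∘ is
unique: any other latin bitrade (T∘, T⋆') has T⋆' = T⋆. -/
theorem thin_unique_mate {A1 A2 A3 : Type*} (T U U' : Set (A1 × A2 × A3))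
    (h : IsBitrade T U) (hthin : IsThin T U) (h' : IsBitrade T U') :
    U = U' := by
  obtain ⟨hTpls, hUpls, hdisj, hTU, hUT⟩ := h
  obtain ⟨-, hU'pls, hdisj', hTU', hU'T⟩ := h'
  -- Key step: U' ⊆ U
  have key : U' ⊆ U := by
    rintro ⟨i, j', k'⟩ hu'
    obtain ⟨ha, hb, hc⟩ := hU'T hu'
    obtain ⟨⟨ib, jb, kb⟩, ⟨htb, hb1, hb3⟩, -⟩ := hb
    obtain ⟨⟨ic, jc, kc⟩, ⟨htc, hc2, hc3⟩, -⟩ := hc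
    simp only at hb1 hb3 hc2 hc3
    rw [hb1, hb3] at htb; rw [hc2, hc3] at htc
    have hjb : jb ≠ j' := by
      rintro rfl
      exact Set.disjoint_left.mp hdisj' htb hu'
    have hic : i ≠ ic := by
      rintro rfl
      exact Set.disjoint_left.mp hdisj' htc hu'
    obtain ⟨⟨ia, ja, ka⟩, ⟨hta, ha1, ha2⟩, -⟩ := ha
    simp only at ha1 ha2
    rw [ha1, ha2] at hta
    obtain ⟨hu, -, -⟩ := hTU hta
    obtain ⟨⟨iu, ju, ku⟩, ⟨huU, hu1, hu2⟩, -⟩ := hu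
    simp only at hu1 hu2
    rw [hu1, hu2] at huU
    have := hthin i jb k' ic j' htb htc hic hjb ku huU
    subst this
    exact huU
  -- Now U ⊆ U' using the key inclusion and that U is a PLS
  have key2 : U ⊆ U' := by
    rintro ⟨i, j, k⟩ hu
    obtain ⟨ht, -, -⟩ := hUT hu
    obtain ⟨⟨it, jt, kt⟩, ⟨htT, ht1, ht2⟩, -⟩ := ht
    simp only at ht1 ht2
    rw [ht1, ht2] at htT
    obtain ⟨hu', -, -⟩ := hTU' htT
    obtain ⟨⟨iv, jv, kv⟩, ⟨hvU', hv1, hv2⟩, -⟩ := hu'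
    simp only at hv1 hv2
    rw [hv1, hv2] at hvU'
    have hvU : (i, j, kv) ∈ U := key hvU'
    have := (hUpls hu hvU).1 ⟨rfl, rfl⟩
    rw [this]
    exact hvU'
  exact le_antisymm key2 key
end

section
/- Let (T∘, T⋆) be a latin bitrade with associated fixed-point-free permutations τ1, τ2, τ3 of T∘ satisfying τ1τ2τ3 = id. For distinct r, s ∈ {1,2,3}, any cycle (orbit of ⟨τ_r⟩) ρ of τ_r and any cycle μ of τ_s share at most one point: |mov(ρ) ∩ mov(μ)| ≤ 1, where mov denotes the underlying point set of the cycle. -/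
lemma fix_zpow {α β : Type*} (σ : Equiv.Perm α) (f : α → β)
    (hf : ∀ x, f (σ x) = f x) : ∀ (n : ℤ) (x : α), f ((σ ^ n) x) = f x := by
  intro n
  induction n using Int.induction_on with
  | zero => intro x; simp
  | succ n ih =>
      intro x
      have : σ ^ ((n : ℤ) + 1) = σ ^ (n : ℤ) * σ := zpow_add_one σ n
      rw [this, Equiv.Perm.mul_apply, ih, hf]
  | pred n ih =>
      intro x
      have : σ ^ (-(n : ℤ) - 1) = σ ^ (-(n : ℤ)) * σ⁻¹ := zpow_sub_one σ (-n)
      rw [this, Equiv.Perm.mul_apply, ih]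
      have := hf (σ⁻¹ x)
      simpa using this.symm

lemma orbit_const {α β : Type*} (σ : Equiv.Perm α) (f : α → β)
    (hf : ∀ x, f (σ x) = f x) {x a : α}
    (ha : a ∈ MulAction.orbit (Subgroup.zpowers σ) x) : f a = f x := by
  obtain ⟨⟨g, m, rfl⟩, rfl⟩ := ha
  exact fix_zpow σ f hf m x

/-- (Q1): a cycle of τ_r and a cycle of τ_s (r ≠ s) meet in at most one
point. Cycles are the orbits of the cyclic groups generated by the τᵢ. -/
theorem cycles_meet_in_at_most_one_point {A1 A2 A3 : Type*}
    (T U : Set (A1 × A2 × A3))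
    (h : IsBitrade T U) (e1 e2 e3 : U ≃ T)
    (h1 : IsBeta1 T U e1) (h2 : IsBeta2 T U e2) (h3 : IsBeta3 T U e3) :
    let τ1 : Equiv.Perm T := e2.symm.trans e3
    let τ2 : Equiv.Perm T := e3.symm.trans e1
    let τ3 : Equiv.Perm T := e1.symm.trans e2
    (∀ x y : T, (MulAction.orbit (Subgroup.zpowers τ1) x ∩
        MulAction.orbit (Subgroup.zpowers τ2) y).Subsingleton) ∧
    (∀ x y : T, (MulAction.orbit (Subgroup.zpowers τ1) x ∩
        MulAction.orbit (Subgroup.zpowers τ3) y).Subsingleton) ∧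
    (∀ x y : T, (MulAction.orbit (Subgroup.zpowers τ2) x ∩
        MulAction.orbit (Subgroup.zpowers τ3) y).Subsingleton) := by
  intro τ1 τ2 τ3
  have hT := h.1
  have f1 : ∀ x : T, ((τ1 x : A1 × A2 × A3).1) = (x : A1 × A2 × A3).1 := by
    intro x
    have ha := (h3 (e2.symm x)).1
    have hb := (h2 (e2.symm x)).1
    rw [Equiv.apply_symm_apply] at hb
    exact ha.trans hb.symm
  have f2 : ∀ x : T, ((τ2 x : A1 × A2 × A3).2.1) = (x : A1 × A2 × A3).2.1 := by
    intro x
    have ha := (h1 (e3.symm x)).2.1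
    have hb := (h3 (e3.symm x)).2.1
    rw [Equiv.apply_symm_apply] at hb
    exact ha.trans hb.symm
  have f3 : ∀ x : T, ((τ3 x : A1 × A2 × A3).2.2) = (x : A1 × A2 × A3).2.2 := by
    intro x
    have ha := (h2 (e1.symm x)).2.2
    have hb := (h1 (e1.symm x)).2.2
    rw [Equiv.apply_symm_apply] at hb
    exact ha.trans hb.symm
  refine ⟨?_, ?_, ?_⟩
  · intro x y a ⟨ha1, ha2⟩ b ⟨hb1, hb2⟩
    have c1 : (a : A1 × A2 × A3).1 = (b : A1 × A2 × A3).1 :=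
      (orbit_const τ1 (fun z => (z : A1 × A2 × A3).1) f1 ha1).trans
        (orbit_const τ1 (fun z => (z : A1 × A2 × A3).1) f1 hb1).symm
    have c2 : (a : A1 × A2 × A3).2.1 = (b : A1 × A2 × A3).2.1 :=
      (orbit_const τ2 (fun z => (z : A1 × A2 × A3).2.1) f2 ha2).trans
        (orbit_const τ2 (fun z => (z : A1 × A2 × A3).2.1) f2 hb2).symm
    exact Subtype.ext ((hT a.2 b.2).1 ⟨c1, c2⟩)
  · intro x y a ⟨ha1, ha2⟩ b ⟨hb1, hb2⟩
    have c1 : (a : A1 × A2 × A3).1 = (b : A1 × A2 × A3).1 :=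
      (orbit_const τ1 (fun z => (z : A1 × A2 × A3).1) f1 ha1).trans
        (orbit_const τ1 (fun z => (z : A1 × A2 × A3).1) f1 hb1).symm
    have c2 : (a : A1 × A2 × A3).2.2 = (b : A1 × A2 × A3).2.2 :=
      (orbit_const τ3 (fun z => (z : A1 × A2 × A3).2.2) f3 ha2).trans
        (orbit_const τ3 (fun z => (z : A1 × A2 × A3).2.2) f3 hb2).symm
    exact Subtype.ext ((hT a.2 b.2).2.1 ⟨c1, c2⟩)
  · intro x y a ⟨ha1, ha2⟩ b ⟨hb1, hb2⟩
    have c1 : (a : A1 × A2 × A3).2.1 = (b : A1 × A2 × A3).2.1 :=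
      (orbit_const τ2 (fun z => (z : A1 × A2 × A3).2.1) f2 ha1).trans
        (orbit_const τ2 (fun z => (z : A1 × A2 × A3).2.1) f2 hb1).symm
    have c2 : (a : A1 × A2 × A3).2.2 = (b : A1 × A2 × A3).2.2 :=
      (orbit_const τ3 (fun z => (z : A1 × A2 × A3).2.2) f3 ha2).trans
        (orbit_const τ3 (fun z => (z : A1 × A2 × A3).2.2) f3 hb2).symm
    exact Subtype.ext ((hT a.2 b.2).2.2 ⟨c1, c2⟩)
end
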